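/- arXiv:2509.07761 — 4 statements merged into one kernel-verified Lean document; each statement's English description precedes it below -/
import Mathlib

section
/- For a finite field F_q = {α_1,…,α_q} and integer k with 1 ≤ k ≤ q, the projective Reed–Solomon code PRS_q(k) (the image of the evaluation of homogeneous polynomials of degree k-1 in F_q[X,Y] at the q+1 points (0,1),(1,α_1),…,(1,α_q)) has minimum distance q+2-k. -/
noncomputable def dualCode (F : Type*) [Field F] {ι : Type*} [Fintype ι]
    (C : Submodule F (ι → F)) : Submodule F (ι → F) where
  carrier := {x | ∀ c ∈ C, ∑ i, x i * c i = 0}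
  zero_mem' := by intro c _; simp
  add_mem' := by
    intro x y hx hy c hc
    simp only [Pi.add_apply, add_mul, Finset.sum_add_distrib]
    rw [hx c hc, hy c hc, add_zero]
  smul_mem' := by
    intro a x hx c hc
    simp only [Pi.smul_apply, smul_eq_mul, mul_assoc, ← Finset.mul_sum]
    rw [hx c hc, mul_zero]

noncomputable def minDist (F : Type*) [Field F] {ι : Type*} [Fintype ι] [DecidableEq F]
    (C : Submodule F (ι → F)) : ℕ :=
  sInf {w | ∃ c ∈ C, c ≠ 0 ∧ hammingNorm c = w}

/-- Evaluation points of the projective Reed–Solomon code: the point at infinity `(0,1)`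
(indexed by `none`) and the affine points `(1,α)` for `α ∈ F` (indexed by `some α`). -/
noncomputable def PRSpt (F : Type*) [Field F] (p : Option F) : Fin 2 → F :=
  Option.elim p ![(0 : F), 1] (fun α => ![1, α])

/-- The projective Reed–Solomon code `PRS_q(k)`: the image of the space of homogeneous
polynomials of degree `k - 1` in two variables under evaluation at the `q+1` points of
`ℙ¹(F)`.  By convention it is `{0}` for `k ≤ 0` (and it is the full space for `k ≥ q+1`). -/
noncomputable def PRS (F : Type*) [Field F] (k : ℤ) : Submodule F (Option F → F) :=
  if k ≤ 0 then ⊥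
  else (MvPolynomial.homogeneousSubmodule (Fin 2) F (k - 1).toNat).map
    (LinearMap.pi fun p : Option F => (MvPolynomial.aeval (PRSpt F p)).toLinearMap)


section Helpers

variable {F : Type*} [Field F]

lemma aux_monomial (s : Fin 2 →₀ ℕ) (a : F) :
    MvPolynomial.aeval (![1, Polynomial.X] : Fin 2 → Polynomial F) (MvPolynomial.monomial s a)
      = Polynomial.C a * Polynomial.X ^ (s 1) := by
  rw [MvPolynomial.aeval_monomial, Finsupp.prod_fintype _ _ (fun i => pow_zero _),
    Fin.prod_univ_two]
  simp [Polynomial.algebraMap_eq]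

lemma aux_coeff (P : MvPolynomial (Fin 2) F) (n : ℕ) :
    (MvPolynomial.aeval (![1, Polynomial.X] : Fin 2 → Polynomial F) P).coeff n
      = ∑ s ∈ P.support, if s 1 = n then MvPolynomial.coeff s P else 0 := by
  conv_lhs => rw [P.as_sum, map_sum]
  rw [Polynomial.finset_sum_coeff]
  refine Finset.sum_congr rfl fun s _ => ?_
  rw [aux_monomial]
  simp [Polynomial.coeff_X_pow, eq_comm]

lemma degree_two (s : Fin 2 →₀ ℕ) : Finsupp.degree s = s 0 + s 1 := by
  rw [Finsupp.degree_eq_weight_one, Finsupp.weight_apply]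
  rw [Finsupp.sum_fintype _ _ (by simp), Fin.sum_univ_two]
  simp

lemma support_deg {P : MvPolynomial (Fin 2) F} {d : ℕ} (hP : P.IsHomogeneous d)
    {s : Fin 2 →₀ ℕ} (hs : s ∈ P.support) : s 0 + s 1 = d := by
  rw [← degree_two]
  rw [MvPolynomial.mem_support_iff] at hs
  rw [← hP hs, Finsupp.degree_eq_weight_one]
  rfl

lemma aux_coeff_zero {P : MvPolynomial (Fin 2) F} {d : ℕ} (hP : P.IsHomogeneous d)
    {n : ℕ} (hn : d < n) :
    (MvPolynomial.aeval (![1, Polynomial.X] : Fin 2 → Polynomial F) P).coeff n = 0 := by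
  rw [aux_coeff]
  refine Finset.sum_eq_zero fun s hs => ?_
  have := support_deg hP hs
  rw [if_neg (by omega)]

lemma single_eq {s : Fin 2 →₀ ℕ} {d : ℕ} (h0 : s 0 = 0) (h1 : s 1 = d) :
    s = Finsupp.single 1 d := by
  ext i
  fin_cases i <;> simp [h0, h1, Finsupp.single_apply]

lemma aux_coeff_top {P : MvPolynomial (Fin 2) F} {d : ℕ} (hP : P.IsHomogeneous d) :
    (MvPolynomial.aeval (![1, Polynomial.X] : Fin 2 → Polynomial F) P).coeff d
      = MvPolynomial.coeff (Finsupp.single 1 d) P := by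
  rw [aux_coeff]
  rw [Finset.sum_eq_single (Finsupp.single 1 d)]
  · simp
  · intro s hs hne
    have h := support_deg hP hs
    rw [if_neg]
    intro h1
    exact hne (single_eq (by omega) h1)
  · intro h
    rw [MvPolynomial.notMem_support_iff] at h
    simp [h]

lemma aux_none {P : MvPolynomial (Fin 2) F} {d : ℕ} (hP : P.IsHomogeneous d) :
    MvPolynomial.aeval (![(0:F), 1]) P = MvPolynomial.coeff (Finsupp.single 1 d) P := by
  conv_lhs => rw [P.as_sum, map_sum]
  rw [Finset.sum_eq_single (Finsupp.single 1 d)]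
  · rw [MvPolynomial.aeval_monomial, Finsupp.prod_fintype _ _ (fun i => pow_zero _),
      Fin.prod_univ_two]
    simp
  · intro s hs hne
    have h := support_deg hP hs
    rw [MvPolynomial.aeval_monomial, Finsupp.prod_fintype _ _ (fun i => pow_zero _),
      Fin.prod_univ_two]
    have h0 : s 0 ≠ 0 := fun h0 => hne (single_eq h0 (by omega))
    simp [zero_pow h0]
  · intro h
    rw [MvPolynomial.notMem_support_iff] at h
    simp [h]

lemma aux_eval (P : MvPolynomial (Fin 2) F) (α : F) :
    Polynomial.eval α (MvPolynomial.aeval (![1, Polynomial.X] : Fin 2 → Polynomial F) P)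
      = MvPolynomial.aeval ![1, α] P := by
  have h := congrFun (congrArg DFunLike.coe
    (MvPolynomial.comp_aeval (f := (![1, Polynomial.X] : Fin 2 → Polynomial F))
      (φ := Polynomial.aeval α))) P
  simp only [AlgHom.coe_comp, Function.comp_apply] at h
  rw [← Polynomial.coe_aeval_eq_eval, h]
  have : (fun i => (Polynomial.aeval α) ((![1, Polynomial.X] : Fin 2 → Polynomial F) i)) = ![(1:F), α] := by
    funext i; fin_cases i <;> simp
  rw [this]

lemma card_filter_option {α : Type*} [Fintype α] (p : Option α → Prop) [DecidablePred p] :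
    (Finset.univ.filter p).card
      = (if p none then 1 else 0) + (Finset.univ.filter fun a => p (some a)).card := by
  classical
  have h : Finset.univ.filter p =
      (if p none then {none} else ∅)
        ∪ (Finset.univ.filter fun a => p (some a)).map Function.Embedding.some := by
    ext x
    cases x with
    | none => by_cases h : p none <;> simp [h]
    | some a => by_cases h : p none <;> simp [h]
  rw [h, Finset.card_union_of_disjoint, Finset.card_map]
  · congr 1
    split <;> simp
  · split <;> simp [Finset.disjoint_left]

lemma PRSpt_none : PRSpt F none = ![(0:F), 1] := rfl
lemma PRSpt_some (α : F) : PRSpt F (some α) = ![(1:F), α] := rfl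

lemma zeros_le [Fintype F] [DecidableEq F] {d : ℕ} {P : MvPolynomial (Fin 2) F}
    (hP : P.IsHomogeneous d)
    (hc : (fun p => MvPolynomial.aeval (PRSpt F p) P) ≠ 0) :
    (Finset.univ.filter fun p : Option F =>
      MvPolynomial.aeval (PRSpt F p) P = 0).card ≤ d := by
  classical
  set c : Option F → F := fun p => MvPolynomial.aeval (PRSpt F p) P with hcdef
  set f : Polynomial F :=
    MvPolynomial.aeval (![1, Polynomial.X] : Fin 2 → Polynomial F) P with hfdef
  have heval : ∀ α : F, c (some α) = f.eval α := by
    intro α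
    rw [aux_eval]
    rfl
  have hnone : c none = f.coeff d := by
    rw [aux_coeff_top hP]
    exact aux_none hP
  have hf : f ≠ 0 := by
    intro h
    apply hc
    funext p
    cases p with
    | none => rw [hcdef]; show c none = 0; rw [hnone, h]; simp
    | some α => rw [hcdef]; show c (some α) = 0; rw [heval, h]; simp
  have haff : (Finset.univ.filter fun α : F => f.eval α = 0).card ≤ f.natDegree := by
    calc (Finset.univ.filter fun α : F => f.eval α = 0).card
        ≤ f.roots.toFinset.card := by
          apply Finset.card_le_card
          intro α hα
          rw [Finset.mem_filter] at hα
          rw [Multiset.mem_toFinset, Polynomial.mem_roots hf]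
          exact hα.2
      _ ≤ Multiset.card f.roots := Multiset.toFinset_card_le _
      _ ≤ f.natDegree := Polynomial.card_roots' f
  have hdeg : f.natDegree ≤ d := by
    rw [Polynomial.natDegree_le_iff_coeff_eq_zero]
    intro m hm
    exact aux_coeff_zero hP hm
  rw [card_filter_option]
  by_cases h0 : c none = 0
  · rcases Nat.eq_zero_or_pos d with hd | hd
    · exfalso
      apply hf
      subst hd
      have : f.natDegree = 0 := Nat.le_zero.mp hdeg
      rw [hnone] at h0
      rw [Polynomial.eq_C_of_natDegree_le_zero hdeg, h0, map_zero]
    · have hdeg' : f.natDegree ≤ d - 1 := by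
        rw [Polynomial.natDegree_le_iff_coeff_eq_zero]
        intro m hm
        rcases eq_or_lt_of_le (show d ≤ m by omega) with h | h
        · rw [← h, ← hnone]; exact h0
        · exact aux_coeff_zero hP h
      have : ∀ p : Option F, (c p = 0) = (MvPolynomial.aeval (PRSpt F p) P = 0) := fun _ => rfl
      rw [if_pos h0]
      have heq : (Finset.univ.filter fun α : F =>
          MvPolynomial.aeval (PRSpt F (some α)) P = 0)
          = (Finset.univ.filter fun α : F => f.eval α = 0) := by
        apply Finset.filter_congr
        intro α _
        rw [← heval α]
      rw [heq]
      omega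
  · rw [if_neg h0]
    have heq : (Finset.univ.filter fun α : F =>
        MvPolynomial.aeval (PRSpt F (some α)) P = 0)
        = (Finset.univ.filter fun α : F => f.eval α = 0) := by
      apply Finset.filter_congr
      intro α _
      rw [← heval α]
    rw [heq]
    omega

lemma upper_codeword [Fintype F] [DecidableEq F] {d : ℕ} (hd : d < Fintype.card F) :
    ∃ P : MvPolynomial (Fin 2) F, P.IsHomogeneous d ∧
      (fun p => MvPolynomial.aeval (PRSpt F p) P) ≠ 0 ∧
      (Finset.univ.filter fun p : Option F =>
        MvPolynomial.aeval (PRSpt F p) P = 0).card = d := by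
  classical
  obtain ⟨ι⟩ : Nonempty (Fin d ↪ F) := by
    rw [Function.Embedding.nonempty_iff_card_le, Fintype.card_fin]
    omega
  set P : MvPolynomial (Fin 2) F :=
    ∏ i : Fin d, (MvPolynomial.X (1 : Fin 2) - MvPolynomial.C (ι i) * MvPolynomial.X (0 : Fin 2))
    with hPdef
  have hhom : P.IsHomogeneous d := by
    have := MvPolynomial.IsHomogeneous.prod Finset.univ
      (fun i : Fin d => (MvPolynomial.X (1 : Fin 2) : MvPolynomial (Fin 2) F)
        - MvPolynomial.C (ι i) * MvPolynomial.X (0 : Fin 2))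
      (fun _ => 1)
      (fun i _ => (MvPolynomial.isHomogeneous_X _ _).sub
        (MvPolynomial.isHomogeneous_C_mul_X _ _))
    rw [hPdef]
    simpa using this
  have hvnone : MvPolynomial.aeval (PRSpt F none) P = 1 := by
    rw [hPdef, map_prod]
    apply Finset.prod_eq_one
    intro i _
    rw [PRSpt_none]
    simp
  have hvsome : ∀ α : F, MvPolynomial.aeval (PRSpt F (some α)) P = ∏ i, (α - ι i) := by
    intro α
    rw [hPdef, map_prod]
    apply Finset.prod_congr rfl
    intro i _
    rw [PRSpt_some]
    simp
  refine ⟨P, hhom, ?_, ?_⟩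
  · intro h
    have := congrFun h none
    rw [hvnone] at this
    simp at this
  · have heq : (Finset.univ.filter fun p : Option F =>
        MvPolynomial.aeval (PRSpt F p) P = 0)
        = Finset.univ.image (fun i : Fin d => (some (ι i) : Option F)) := by
      ext p
      cases p with
      | none =>
        simp only [Finset.mem_filter, Finset.mem_univ, true_and, Finset.mem_image, hvnone]
        simp
      | some α =>
        simp only [Finset.mem_filter, Finset.mem_univ, true_and, Finset.mem_image, hvsome α]
        rw [Finset.prod_eq_zero_iff]
        simp only [Finset.mem_univ, true_and]
        refine exists_congr fun a => ⟨fun h => ?_, fun h => ?_⟩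
        · rw [(sub_eq_zero.mp h : α = ι a)]
        · rw [Option.some_inj] at h
          rw [← h, sub_self]
    have hinj : Function.Injective fun i : Fin d => (some (ι i) : Option F) :=
      fun a b hab => ι.injective (Option.some_injective F hab)
    rw [heq, Finset.card_image_of_injective _ hinj, Finset.card_univ, Fintype.card_fin]

end Helpers

/-- the projective Reed–Solomon code `PRS_q(k)` with `1 ≤ k ≤ q` has minimum
distance `q + 2 - k`. -/
theorem PRS_minDist (F : Type*) [Field F] [Fintype F] [DecidableEq F] (q k : ℕ)
    (hq : Fintype.card F = q) (hk1 : 1 ≤ k) (hk2 : k ≤ q) :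
    minDist F (PRS F (k : ℤ)) = q + 2 - k := by
  classical
  have hq1 : 1 ≤ q := le_trans hk1 hk2
  have hd : ((k:ℤ) - 1).toNat = k - 1 := by omega
  have hk0 : ¬ ((k:ℤ) ≤ 0) := by omega
  have hPRS : PRS F (k:ℤ) = (MvPolynomial.homogeneousSubmodule (Fin 2) F (k-1)).map
      (LinearMap.pi fun p : Option F => (MvPolynomial.aeval (PRSpt F p)).toLinearMap) := by
    rw [PRS, if_neg hk0, hd]
  have hham : ∀ c : Option F → F,
      hammingNorm c = (Finset.univ.filter fun p => c p ≠ 0).card := by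
    intro c
    rfl
  have hcard : ∀ c : Option F → F,
      (Finset.univ.filter fun p => c p ≠ 0).card
        + (Finset.univ.filter fun p => c p = 0).card = q + 1 := by
    intro c
    have h := Finset.card_filter_add_card_filter_not
      (s := (Finset.univ : Finset (Option F))) (p := fun p => c p ≠ 0)
    simp only [ne_eq, not_not] at h
    rw [Finset.card_univ, Fintype.card_option, hq] at h
    convert h using 3
  obtain ⟨P, hPhom, hPne, hPzeros⟩ :=
    upper_codeword (F := F) (d := k - 1) (by rw [hq]; omega)
  have hmem : q + 2 - k ∈ {w | ∃ c ∈ PRS F (k:ℤ), c ≠ 0 ∧ hammingNorm c = w} := by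
    refine ⟨fun p => MvPolynomial.aeval (PRSpt F p) P, ?_, hPne, ?_⟩
    · rw [hPRS]
      exact Submodule.mem_map.mpr
        ⟨P, (MvPolynomial.mem_homogeneousSubmodule _ _).mpr hPhom, rfl⟩
    · rw [hham]
      have := hcard (fun p => MvPolynomial.aeval (PRSpt F p) P)
      omega
  rw [minDist]
  apply le_antisymm
  · exact Nat.sInf_le hmem
  · refine le_csInf ⟨_, hmem⟩ ?_
    rintro w ⟨c, hcm, hcne, rfl⟩
    rw [hPRS] at hcm
    obtain ⟨Q, hQmem, rfl⟩ := Submodule.mem_map.mp hcm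
    have hQhom := (MvPolynomial.mem_homogeneousSubmodule _ _).mp hQmem
    have hz := zeros_le hQhom hcne
    show q + 2 - k ≤ hammingNorm (fun p => MvPolynomial.aeval (PRSpt F p) Q)
    rw [hham]
    have := hcard (fun p => MvPolynomial.aeval (PRSpt F p) Q)
    omega
end

section
/- For a finite field F_q and integer k with 0 ≤ k ≤ q+1, the dual of the projective Reed–Solomon code PRS_q(k) with respect to the standard Euclidean bilinear form on F_q^{q+1} equals PRS_q(q+1-k). -/
open Finset MvPolynomial Module

section Aux

variable (F : Type*) [Field F]

/-- The evaluation vector of the monomial `X^i Y^(d-i)`. -/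
noncomputable def vmon (d i : ℕ) : Option F → F :=
  fun p => PRSpt F p 0 ^ i * PRSpt F p 1 ^ (d - i)

variable {F}

lemma vmon_none (d i : ℕ) : vmon F d i none = if i = 0 then 1 else 0 := by
  simp [vmon, PRSpt, zero_pow_eq]

lemma vmon_some (d i : ℕ) (α : F) : vmon F d i (some α) = α ^ (d - i) := by
  simp [vmon, PRSpt]

lemma PRS_eq_span (d : ℕ) :
    PRS F ((d : ℤ) + 1) =
      Submodule.span F (Set.range fun i : Fin (d + 1) => vmon F d (i : ℕ)) := by
  classical
  rw [PRS, if_neg (by omega), show ((d : ℤ) + 1 - 1).toNat = d by omega]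
  set L : MvPolynomial (Fin 2) F →ₗ[F] (Option F → F) :=
    LinearMap.pi fun p : Option F => (MvPolynomial.aeval (PRSpt F p)).toLinearMap with hL
  apply le_antisymm
  · rintro _ ⟨P, hP, rfl⟩
    rw [SetLike.mem_coe, mem_homogeneousSubmodule] at hP
    have hsum : L P = ∑ v ∈ P.support, L (monomial v (coeff v P)) := by
      conv_lhs => rw [P.as_sum]
      rw [map_sum]
    rw [hsum]
    apply Submodule.sum_mem
    intro v hv
    have hdeg : v 0 + v 1 = d := by
      have h := hP (mem_support_iff.mp hv)
      rw [show (Finsupp.weight 1 : (Fin 2 →₀ ℕ) →+ ℕ) = Finsupp.degree from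
        Finsupp.degree_eq_weight_one.symm] at h
      rw [← h, Finsupp.degree, ← Fin.sum_univ_two v]
      exact (Finset.sum_subset (Finset.subset_univ _)
        (fun i _ hi => Finsupp.notMem_support_iff.mp hi)).symm
    have hcalc : L (monomial v (coeff v P)) = (coeff v P) • vmon F d (v 0) := by
      funext p
      simp only [hL, LinearMap.pi_apply, AlgHom.toLinearMap_apply, aeval_monomial,
        Pi.smul_apply, smul_eq_mul]
      rw [Finsupp.prod_fintype _ _ (fun i => pow_zero _), Fin.prod_univ_two]
      rw [vmon, show v 1 = d - v 0 by omega]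
      try simp only [Algebra.algebraMap_self_apply]
      try ring
    rw [hcalc]
    apply Submodule.smul_mem
    apply Submodule.subset_span
    exact ⟨⟨v 0, by omega⟩, rfl⟩
  · rw [Submodule.span_le]
    rintro _ ⟨i, rfl⟩
    have hi : (i : ℕ) ≤ d := by omega
    refine ⟨X 0 ^ (i : ℕ) * X 1 ^ (d - i), ?_, ?_⟩
    · rw [SetLike.mem_coe, mem_homogeneousSubmodule]
      have := (isHomogeneous_X_pow (R := F) (0 : Fin 2) (i : ℕ)).mul
        (isHomogeneous_X_pow (1 : Fin 2) (d - i))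
      rwa [Nat.add_sub_cancel' hi] at this
    · funext p
      simp [hL, vmon]

lemma vmon_li [Fintype F] {d : ℕ} (hd : d ≤ Fintype.card F) :
    LinearIndependent F (fun i : Fin (d + 1) => vmon F d (i : ℕ)) := by
  classical
  rw [Fintype.linearIndependent_iff]
  intro g hg
  have h0 : g 0 = 0 := by
    have h := congrFun hg none
    simp only [Finset.sum_apply, Pi.smul_apply, smul_eq_mul, vmon_none, Pi.zero_apply,
      mul_ite, mul_one, mul_zero] at h
    rw [Finset.sum_eq_single (0 : Fin (d + 1))] at h
    · simpa using h
    · intro b _ hb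
      rw [if_neg (show ¬((b : ℕ) = 0) from fun h => hb (Fin.ext h))]
    · simp
  rcases Nat.eq_zero_or_pos d with hd0 | hd1
  · intro i
    subst hd0
    have : i = 0 := Fin.ext (by have := i.is_lt; omega)
    rw [this]; exact h0
  set P : Polynomial F := ∑ i : Fin (d + 1), Polynomial.C (g i) * Polynomial.X ^ (d - (i : ℕ))
    with hPdef
  have heval : ∀ α : F, P.eval α = 0 := by
    intro α
    have h := congrFun hg (some α)
    simp only [Finset.sum_apply, Pi.smul_apply, smul_eq_mul, vmon_some, Pi.zero_apply] at h
    simpa [hPdef, Polynomial.eval_finset_sum] using h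
  have hdeg : P.natDegree < Fintype.card F := by
    have : P.natDegree ≤ d - 1 := by
      apply Polynomial.natDegree_sum_le_of_forall_le
      intro i _
      by_cases hi0 : i = 0
      · subst hi0
        rw [h0]
        simp
      · have h1i : 1 ≤ (i : ℕ) := by
          rcases Nat.eq_zero_or_pos (i : ℕ) with h' | h'
          · exact absurd (Fin.ext h') hi0
          · exact h'
        refine le_trans (Polynomial.natDegree_C_mul_le _ _)
          (le_trans (Polynomial.natDegree_X_pow_le _) ?_)
        omega
    omega
  have hP0 : P = 0 := by
    apply Polynomial.eq_zero_of_natDegree_lt_card_of_eval_eq_zero' P Finset.univ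
      (fun α _ => heval α)
    simpa using hdeg
  intro i
  have hc : P.coeff (d - (i : ℕ)) = 0 := by rw [hP0]; simp
  rw [hPdef, Polynomial.finset_sum_coeff] at hc
  simp only [Polynomial.coeff_C_mul, Polynomial.coeff_X_pow] at hc
  rw [Finset.sum_eq_single i] at hc
  · simpa using hc
  · intro j _ hj
    have hji : (j : ℕ) ≠ (i : ℕ) := fun h => hj (Fin.ext h)
    have h1 := j.is_lt
    have h2 := i.is_lt
    rw [if_neg (by omega), mul_zero]
  · simp

lemma vmon_orth [Fintype F] {d1 d2 i j : ℕ} (hd : d1 + d2 + 1 = Fintype.card F)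
    (hi : i ≤ d1) (hj : j ≤ d2) :
    ∑ p : Option F, vmon F d1 i p * vmon F d2 j p = 0 := by
  classical
  have hq2 : 2 ≤ Fintype.card F := Fintype.one_lt_card
  rw [Fintype.sum_option]
  simp only [vmon_none, vmon_some]
  rw [Finset.sum_congr rfl (fun α _ => (pow_add α (d1 - i) (d2 - j)).symm)]
  by_cases h : i = 0 ∧ j = 0
  · obtain ⟨rfl, rfl⟩ := h
    simp only [if_pos rfl, Nat.sub_zero, mul_one]
    have he : d1 + d2 = Fintype.card F - 1 := by omega
    rw [he]
    have hsum : ∑ α : F, α ^ (Fintype.card F - 1)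
        = ∑ α : F, ((1 : F) - if α = 0 then 1 else 0) := by
      apply Finset.sum_congr rfl
      intro α _
      by_cases hα : α = 0
      · rw [hα, if_pos rfl, zero_pow (by omega), sub_self]
      · rw [if_neg hα, FiniteField.pow_card_sub_one_eq_one α hα, sub_zero]
    rw [hsum, Finset.sum_sub_distrib, Finset.sum_const, Finset.sum_ite_eq' Finset.univ (0 : F)
      (fun _ => (1 : F))]
    simp [FiniteField.cast_card_eq_zero]
  · have hij : 1 ≤ i + j := by omega
    have h1 : (if i = 0 then (1 : F) else 0) * (if j = 0 then (1 : F) else 0) = 0 := by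
      by_cases hi0 : i = 0
      · have hj0 : j ≠ 0 := by omega
        rw [if_neg hj0, mul_zero]
      · rw [if_neg hi0, zero_mul]
    rw [h1, zero_add]
    apply FiniteField.sum_pow_lt_card_sub_one
    omega

variable (F) in
/-- The standard dot-product bilinear form. -/
noncomputable def dotForm (ι : Type*) [Fintype ι] : LinearMap.BilinForm F (ι → F) :=
  LinearMap.mk₂ F (fun x y => ∑ i, x i * y i)
    (by intro x x' y; simp only [Pi.add_apply, add_mul, Finset.sum_add_distrib])
    (by intro a x y
        simp only [Pi.smul_apply, smul_eq_mul, Finset.mul_sum]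
        exact Finset.sum_congr rfl fun i _ => by ring)
    (by intro x y y'; simp only [Pi.add_apply, mul_add, Finset.sum_add_distrib])
    (by intro a x y
        simp only [Pi.smul_apply, smul_eq_mul, Finset.mul_sum]
        exact Finset.sum_congr rfl fun i _ => by ring)

lemma mem_dualCode {F : Type*} [Field F] {ι : Type*} [Fintype ι] {C : Submodule F (ι → F)}
    {x : ι → F} : x ∈ dualCode F C ↔ ∀ c ∈ C, ∑ i, x i * c i = 0 := Iff.rfl

lemma dotForm_apply {ι : Type*} [Fintype ι] (x y : ι → F) :
    dotForm F ι x y = ∑ i, x i * y i := rfl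

lemma dotForm_isRefl {ι : Type*} [Fintype ι] : (dotForm F ι).IsRefl := by
  intro x y h
  rw [dotForm_apply] at h ⊢
  rw [Finset.sum_congr rfl (fun i _ => mul_comm (y i) (x i))]
  exact h

lemma dotForm_nondeg {ι : Type*} [Fintype ι] [DecidableEq ι] :
    (dotForm F ι).Nondegenerate := by
  refine ⟨fun x hx => ?_, fun x hx => ?_⟩
  · funext i
    have h := hx (Pi.single i 1)
    rw [dotForm_apply] at h
    simp only [Pi.single_apply, mul_ite, mul_one, mul_zero] at h
    rwa [Finset.sum_ite_eq' Finset.univ i (fun j => x j), if_pos (Finset.mem_univ i)] at h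
  · funext i
    have h := hx (Pi.single i 1)
    rw [dotForm_apply] at h
    simp only [Pi.single_apply, ite_mul, one_mul, zero_mul] at h
    rwa [Finset.sum_ite_eq' Finset.univ i (fun j => x j), if_pos (Finset.mem_univ i)] at h

lemma dualCode_eq_orthogonal {ι : Type*} [Fintype ι] (C : Submodule F (ι → F)) :
    dualCode F C = (dotForm F ι).orthogonal C := by
  ext x
  constructor
  · intro hx c hc
    have := hx c hc
    rw [dotForm_apply,
      Finset.sum_congr rfl (fun i _ => mul_comm (c i) (x i))]
    exact this
  · intro hx c hc
    have := hx c hc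
    rw [dotForm_apply] at this
    rw [Finset.sum_congr rfl (fun i _ => mul_comm (x i) (c i))]
    exact this

end Aux

set_option maxHeartbeats 1000000 in
/-- for `0 ≤ k ≤ q + 1`, the dual of `PRS_q(k)` is `PRS_q(q + 1 - k)`. -/
theorem PRS_dual (F : Type*) [Field F] [Fintype F] (q k : ℕ)
    (hq : Fintype.card F = q) (hk : k ≤ q + 1) :
    dualCode F (PRS F (k : ℤ)) = PRS F ((q : ℤ) + 1 - k) := by
  classical
  have hq2 : 2 ≤ q := hq ▸ Fintype.one_lt_card
  -- finrank of PRS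
  have hfr : ∀ m : ℕ, m ≤ q + 1 → finrank F (PRS F (m : ℤ)) = m := by
    intro m hm
    cases m with
    | zero =>
      rw [show ((0 : ℕ) : ℤ) = 0 by norm_num, PRS, if_pos le_rfl]
      exact finrank_bot F _
    | succ d =>
      rw [show (((d + 1 : ℕ)) : ℤ) = (d : ℤ) + 1 by push_cast; ring, PRS_eq_span]
      have hli : LinearIndependent F (fun i : Fin (d + 1) => vmon F d (i : ℕ)) :=
        vmon_li (by omega)
      rw [finrank_span_eq_card hli]
      simp
  -- rewrite the integer argument
  have hcast : (q : ℤ) + 1 - k = ((q + 1 - k : ℕ) : ℤ) := by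
    rw [Nat.cast_sub hk]; push_cast; ring
  rw [hcast]
  -- the inclusion
  have hle : PRS F ((q + 1 - k : ℕ) : ℤ) ≤ dualCode F (PRS F (k : ℤ)) := by
    rcases Nat.eq_zero_or_pos k with hk0 | hk1
    · subst hk0
      intro x _
      rw [mem_dualCode]
      intro c hc
      rw [show ((0 : ℕ) : ℤ) = 0 by norm_num, PRS, if_pos le_rfl, Submodule.mem_bot] at hc
      subst hc
      simp
    rcases Nat.lt_or_ge k (q + 1) with hklt | hkge
    · -- 1 ≤ k ≤ q
      obtain ⟨d1, rfl⟩ : ∃ d1, k = d1 + 1 := ⟨k - 1, by omega⟩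
      obtain ⟨d2, hd2⟩ : ∃ d2, q + 1 - (d1 + 1) = d2 + 1 := ⟨q - d1 - 1, by omega⟩
      rw [hd2, show (((d2 + 1 : ℕ)) : ℤ) = (d2 : ℤ) + 1 by push_cast; ring,
        show (((d1 + 1 : ℕ)) : ℤ) = (d1 : ℤ) + 1 by push_cast; ring,
        PRS_eq_span, PRS_eq_span, Submodule.span_le]
      rintro _ ⟨j, rfl⟩
      rw [SetLike.mem_coe, mem_dualCode]
      intro c hc
      have hker : Submodule.span F (Set.range fun i : Fin (d1 + 1) => vmon F d1 (i : ℕ))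
          ≤ LinearMap.ker (dotForm F (Option F) (vmon F d2 (j : ℕ))) := by
        rw [Submodule.span_le]
        rintro _ ⟨i, rfl⟩
        rw [SetLike.mem_coe, LinearMap.mem_ker]
        show ∑ p : Option F, vmon F d2 (j : ℕ) p * vmon F d1 (i : ℕ) p = 0
        exact vmon_orth (by omega) (by omega) (by omega)
      exact hker hc
    · -- k = q + 1
      have : q + 1 - k = 0 := by omega
      rw [this, show ((0 : ℕ) : ℤ) = 0 by norm_num, PRS, if_pos le_rfl]
      exact bot_le
  -- dimension of the dual code
  have hdim : finrank F (dualCode F (PRS F (k : ℤ))) = q + 1 - k := by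
    rw [dualCode_eq_orthogonal, LinearMap.BilinForm.finrank_orthogonal dotForm_nondeg,
      hfr k hk, Module.finrank_fintype_fun_eq_card, Fintype.card_option, hq]
  exact (Submodule.eq_of_le_of_finrank_eq hle
    (by rw [hfr (q + 1 - k) (by omega), hdim])).symm
end

section
/- Let 1 ≤ k_1 < k_2 ≤ q be integers. Then PRS_q(k_1) ∩ PRS_q(k_2) = (0, RS_q(k_1 - 1)), i.e. the intersection consists exactly of codewords whose first coordinate is 0 and whose remaining q coordinates form a word of the affine Reed–Solomon code RS_q(k_1-1). -/
/-- The affine Reed–Solomon code `RS_q(k)`: evaluations of polynomials of degree `< k` at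
all elements of `F`.  By convention it is `{0}` for `k ≤ 0` and the full space for `k ≥ q`. -/
noncomputable def RS (F : Type*) [Field F] (k : ℤ) : Submodule F (F → F) :=
  (Polynomial.degreeLT F k.toNat).map
    (LinearMap.pi fun α : F => (Polynomial.aeval α).toLinearMap)

/-- `(0, C)`: the code obtained by prepending a zero coordinate (at `none`) to each word. -/
noncomputable def zeroExt (F : Type*) [Field F] (C : Submodule F (F → F)) :
    Submodule F (Option F → F) :=
  C.comap (LinearMap.funLeft F F some) ⊓
    LinearMap.ker (LinearMap.proj (R := F) (φ := fun _ : Option F => F) none)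

/-- Dehomogenization: substitute `X0 ↦ 1`, `X1 ↦ Y`. -/
noncomputable def dh (F : Type*) [Field F] : MvPolynomial (Fin 2) F →ₐ[F] Polynomial F :=
  MvPolynomial.aeval ![1, Polynomial.X]

lemma deg2 {s : Fin 2 →₀ ℕ} : s.degree = s 0 + s 1 := by
  rw [Finsupp.degree_apply, Finset.sum_subset (Finset.subset_univ _)
    (fun i _ hi => Finsupp.notMem_support_iff.mp hi), Fin.sum_univ_two]

lemma dh_eval {F : Type*} [Field F] (g : MvPolynomial (Fin 2) F) (α : F) :
    Polynomial.eval α (dh F g) = MvPolynomial.aeval (PRSpt F (some α)) g := by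
  have h : (Polynomial.aeval α).comp (dh F) = MvPolynomial.aeval (PRSpt F (some α)) := by
    rw [dh, MvPolynomial.comp_aeval]
    congr 1
    funext i
    fin_cases i <;> simp [PRSpt]
  calc Polynomial.eval α (dh F g) = Polynomial.aeval α (dh F g) := by simp
    _ = ((Polynomial.aeval α).comp (dh F)) g := rfl
    _ = MvPolynomial.aeval (PRSpt F (some α)) g := by rw [h]

lemma dh_monomial {F : Type*} [Field F] (s : Fin 2 →₀ ℕ) (c : F) :
    dh F (MvPolynomial.monomial s c) = Polynomial.C c * Polynomial.X ^ (s 1) := by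
  rw [dh, MvPolynomial.aeval_monomial, Finsupp.prod_fintype _ _ (fun i => pow_zero _),
    Fin.prod_univ_two]
  simp [Algebra.algebraMap_self_apply]
lemma isHomog_deg {F : Type*} [Field F] {g : MvPolynomial (Fin 2) F} {d : ℕ}
    (hg : g.IsHomogeneous d) {s : Fin 2 →₀ ℕ} (hs : s ∈ g.support) : s 0 + s 1 = d := by
  have := hg (MvPolynomial.mem_support_iff.mp hs)
  rw [Pi.one_def, ← Finsupp.degree_eq_weight_one, deg2] at this
  exact this

lemma dh_mem_degreeLT {F : Type*} [Field F] {g : MvPolynomial (Fin 2) F} {d : ℕ}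
    (hg : g.IsHomogeneous d) : dh F g ∈ Polynomial.degreeLT F (d + 1) := by
  rw [g.as_sum, map_sum]
  refine Submodule.sum_mem _ fun s hs => ?_
  rw [dh_monomial, Polynomial.mem_degreeLT]
  have hsd : s 1 ≤ d := by have := isHomog_deg hg hs; omega
  calc Polynomial.degree (Polynomial.C (MvPolynomial.coeff s g) * Polynomial.X ^ s 1)
      ≤ (s 1 : WithBot ℕ) := by
        simpa using Polynomial.degree_C_mul_X_pow_le (s 1) (MvPolynomial.coeff s g)
    _ < ((d + 1 : ℕ) : WithBot ℕ) := by exact_mod_cast Nat.lt_succ_of_le hsd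

lemma dh_coeff {F : Type*} [Field F] {g : MvPolynomial (Fin 2) F} {d : ℕ}
    (hg : g.IsHomogeneous d) :
    (dh F g).coeff d = MvPolynomial.aeval (PRSpt F none) g := by
  conv_lhs => rw [g.as_sum]
  conv_rhs => rw [g.as_sum]
  rw [map_sum, map_sum, Polynomial.finset_sum_coeff]
  refine Finset.sum_congr rfl fun s hs => ?_
  have hsd : s 0 + s 1 = d := isHomog_deg hg hs
  rw [dh_monomial, Polynomial.coeff_C_mul, Polynomial.coeff_X_pow,
    MvPolynomial.aeval_monomial, Finsupp.prod_fintype _ _ (fun i => pow_zero _),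
    Fin.prod_univ_two]
  have h0 : PRSpt F none 0 = 0 := rfl
  have h1 : PRSpt F none 1 = 1 := rfl
  rw [h0, h1, one_pow, mul_one]
  by_cases h : s 0 = 0
  · have : s 1 = d := by omega
    simp [h, this]
  · have : ¬ (d = s 1) := by omega
    simp [this, zero_pow h]

/-- Homogenization of a univariate polynomial to degree `d`. -/
noncomputable def hm {F : Type*} [Field F] (d : ℕ) (f : Polynomial F) :
    MvPolynomial (Fin 2) F :=
  ∑ b ∈ f.support, MvPolynomial.monomial (Finsupp.single 0 (d - b) + Finsupp.single 1 b)
    (f.coeff b)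

lemma hm_homogeneous {F : Type*} [Field F] {d : ℕ} {f : Polynomial F}
    (hf : ∀ b ∈ f.support, b ≤ d) : (hm d f).IsHomogeneous d := by
  rw [← MvPolynomial.mem_homogeneousSubmodule]
  refine Submodule.sum_mem _ fun b hb => ?_
  rw [MvPolynomial.mem_homogeneousSubmodule]
  refine MvPolynomial.isHomogeneous_monomial _ ?_
  rw [deg2]
  have := hf b hb
  simp only [Finsupp.add_apply, Finsupp.single_apply]
  norm_num
  omega

lemma hm_eval_some {F : Type*} [Field F] (d : ℕ) (f : Polynomial F) (α : F) :
    MvPolynomial.aeval (PRSpt F (some α)) (hm d f) = f.eval α := by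
  rw [hm, map_sum]
  rw [Polynomial.eval_eq_sum, Polynomial.sum]
  refine Finset.sum_congr rfl fun b _ => ?_
  rw [MvPolynomial.aeval_monomial, Finsupp.prod_fintype _ _ (fun i => pow_zero _),
    Fin.prod_univ_two]
  have h0 : PRSpt F (some α) 0 = 1 := rfl
  have h1 : PRSpt F (some α) 1 = α := rfl
  simp [Finsupp.single_apply, h0, h1]

lemma hm_eval_none {F : Type*} [Field F] {d : ℕ} {f : Polynomial F}
    (hf : ∀ b ∈ f.support, b < d) :
    MvPolynomial.aeval (PRSpt F none) (hm d f) = 0 := by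
  rw [hm, map_sum]
  refine Finset.sum_eq_zero fun b hb => ?_
  rw [MvPolynomial.aeval_monomial, Finsupp.prod_fintype _ _ (fun i => pow_zero _),
    Fin.prod_univ_two]
  have h0 : PRSpt F none 0 = 0 := rfl
  have hb' : d - b ≠ 0 := by have := hf b hb; omega
  simp [Finsupp.single_apply, h0, zero_pow hb']
lemma mem_PRS {F : Type*} [Field F] {k : ℕ} (hk : 1 ≤ k) {v : Option F → F} :
    v ∈ PRS F (k : ℤ) ↔ ∃ g : MvPolynomial (Fin 2) F,
      g.IsHomogeneous (k - 1) ∧ ∀ p, MvPolynomial.aeval (PRSpt F p) g = v p := by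
  have hk0 : ¬ ((k : ℤ) ≤ 0) := by exact_mod_cast by omega
  have ht : ((k : ℤ) - 1).toNat = k - 1 := by omega
  rw [PRS, if_neg hk0, ht]
  simp only [Submodule.mem_map, MvPolynomial.mem_homogeneousSubmodule]
  constructor
  · rintro ⟨g, hg, rfl⟩
    exact ⟨g, hg, fun p => rfl⟩
  · rintro ⟨g, hg, he⟩
    exact ⟨g, hg, funext he⟩

lemma mem_RS {F : Type*} [Field F] {k : ℤ} {w : F → F} :
    w ∈ RS F k ↔ ∃ f ∈ Polynomial.degreeLT F k.toNat, ∀ α, f.eval α = w α := by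
  rw [RS]
  simp only [Submodule.mem_map]
  constructor
  · rintro ⟨f, hf, rfl⟩
    exact ⟨f, hf, fun α => by simp [LinearMap.pi_apply]⟩
  · rintro ⟨f, hf, he⟩
    refine ⟨f, hf, funext fun α => ?_⟩
    simpa using he α

/-- for `1 ≤ k₁ < k₂ ≤ q`, `PRS_q(k₁) ∩ PRS_q(k₂) = (0, RS_q(k₁ - 1))`. -/
theorem PRS_inter (F : Type*) [Field F] [Fintype F] (q k₁ k₂ : ℕ)
    (hq : Fintype.card F = q) (h1 : 1 ≤ k₁) (h12 : k₁ < k₂) (h2 : k₂ ≤ q) :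
    PRS F (k₁ : ℤ) ⊓ PRS F (k₂ : ℤ) = zeroExt F (RS F ((k₁ : ℤ) - 1)) := by
  have h1' : 1 ≤ k₂ := by omega
  have ht : ((k₁ : ℤ) - 1).toNat = k₁ - 1 := by omega
  apply le_antisymm
  · rintro v ⟨hv1, hv2⟩
    obtain ⟨g₁, hg₁, he₁⟩ := (mem_PRS h1).1 hv1
    obtain ⟨g₂, hg₂, he₂⟩ := (mem_PRS h1').1 hv2
    have hd₁ : (dh F g₁).degree < ((k₁ : ℕ) : WithBot ℕ) := by
      have := Polynomial.mem_degreeLT.mp (dh_mem_degreeLT hg₁)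
      rwa [Nat.sub_add_cancel h1] at this
    have hd₂ : (dh F g₂).degree < ((k₂ : ℕ) : WithBot ℕ) := by
      have := Polynomial.mem_degreeLT.mp (dh_mem_degreeLT hg₂)
      rwa [Nat.sub_add_cancel h1'] at this
    -- the two dehomogenizations agree on all of F, hence are equal
    have heq : dh F g₁ = dh F g₂ := by
      rcases eq_or_ne (dh F g₁) (dh F g₂) with h | h
      · exact h
      have hne : dh F g₁ - dh F g₂ ≠ 0 := sub_ne_zero.mpr h
      have hz : ∀ α : F, (dh F g₁ - dh F g₂).eval α = 0 := fun α => by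
        rw [Polynomial.eval_sub, dh_eval, dh_eval, he₁, he₂, sub_self]
      have hdeg : (dh F g₁ - dh F g₂).degree < ((q : ℕ) : WithBot ℕ) := by
        refine lt_of_le_of_lt (Polynomial.degree_sub_le _ _) (max_lt ?_ ?_)
        · exact lt_of_lt_of_le hd₁ (by exact_mod_cast by omega)
        · exact lt_of_lt_of_le hd₂ (by exact_mod_cast h2)
      have hcard : (dh F g₁ - dh F g₂).natDegree < Fintype.card F := by
        rw [hq]
        exact_mod_cast (Polynomial.natDegree_lt_iff_degree_lt hne).mpr hdeg
      exact absurd (Polynomial.eq_zero_of_natDegree_lt_card_of_eval_eq_zero _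
        Function.injective_id (fun i => hz i) hcard) hne
    -- the coordinate at infinity vanishes
    have hnone : v none = 0 := by
      have : v none = (dh F g₂).coeff (k₂ - 1) := by rw [dh_coeff hg₂, he₂]
      rw [this, ← heq]
      refine Polynomial.coeff_eq_zero_of_degree_lt (lt_of_lt_of_le hd₁ ?_)
      exact_mod_cast by omega
    have hc1 : (dh F g₁).coeff (k₁ - 1) = 0 := by
      rw [dh_coeff hg₁, he₁, hnone]
    have hmem : dh F g₁ ∈ Polynomial.degreeLT F (k₁ - 1) := by
      rw [Polynomial.mem_degreeLT, Polynomial.degree_lt_iff_coeff_zero]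
      intro m hm
      have hm' : k₁ - 1 ≤ m := by exact_mod_cast hm
      rcases eq_or_lt_of_le hm' with h | h
      · rw [← h]; exact hc1
      · exact Polynomial.coeff_eq_zero_of_degree_lt
          (lt_of_lt_of_le hd₁ (by exact_mod_cast by omega))
    refine ⟨?_, ?_⟩
    · show LinearMap.funLeft F F some v ∈ RS F ((k₁ : ℤ) - 1)
      rw [mem_RS, ht]
      exact ⟨dh F g₁, hmem, fun α => by rw [dh_eval, he₁]; rfl⟩
    · show v none = 0
      exact hnone
  · rintro v ⟨hvs, hv0⟩
    have hv0' : v none = 0 := hv0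
    obtain ⟨f, hf, hfe⟩ := mem_RS.1 hvs
    rw [ht] at hf
    have hfd := Polynomial.mem_degreeLT.mp hf
    have hsup : ∀ b ∈ f.support, b < k₁ - 1 := by
      intro b hb
      have := Polynomial.le_degree_of_ne_zero (Polynomial.mem_support_iff.mp hb)
      have : (b : WithBot ℕ) < ((k₁ - 1 : ℕ) : WithBot ℕ) := lt_of_le_of_lt this hfd
      exact_mod_cast this
    have key : ∀ k : ℕ, 1 ≤ k → k₁ ≤ k → v ∈ PRS F (k : ℤ) := by
      intro k hk hk1
      refine (mem_PRS hk).2 ⟨hm (k - 1) f, hm_homogeneous (fun b hb => by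
        have := hsup b hb; omega), fun p => ?_⟩
      cases p with
      | none =>
        rw [hm_eval_none (fun b hb => by have := hsup b hb; omega), hv0']
      | some α =>
        rw [hm_eval_some]
        exact hfe α
    exact ⟨key k₁ h1 le_rfl, key k₂ h1' (le_of_lt h12)⟩
end

section
/- Let 1 ≤ k_1 < k_2 ≤ q be integers. Then PRS_q(k_1) + PRS_q(k_2) = span{(1,0,…,0)} + (0, RS_q(k_2)) inside F_q^{q+1}. -/
section Aux
variable (F : Type*) [Field F] [DecidableEq F]

/-- the vector `(0, (α^j)_α)` -/
noncomputable def wv (j : ℕ) : Option F → F := fun p => Option.elim p 0 (fun α => α ^ j)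

/-- image of monomial `d` under the PRS evaluation map -/
noncomputable def gv (d : Fin 2 →₀ ℕ) : Option F → F :=
  fun p => (PRSpt F p 0) ^ (d 0) * (PRSpt F p 1) ^ (d 1)

lemma deg2_s7 (d : Fin 2 →₀ ℕ) : d.degree = d 0 + d 1 := by
  rw [Finsupp.degree_apply, Finset.sum_subset (Finset.subset_univ d.support)
    (by intro x _ hx; simpa using Finsupp.notMem_support_iff.mp hx)]
  simp [Fin.sum_univ_two]

lemma gv_eq (d : Fin 2 →₀ ℕ) :
    gv F d = (if d 0 = 0 then Pi.single (none : Option F) (1 : F) else 0) + wv F (d 1) := by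
  funext p
  cases p with
  | none =>
      by_cases h : d 0 = 0 <;>
        simp [gv, wv, PRSpt, h, zero_pow, Pi.single_apply]
  | some α =>
      by_cases h : d 0 = 0 <;>
        simp [gv, wv, PRSpt, h, Pi.single_apply]

lemma PRS_eq_span_s7 (k : ℕ) (hk : 1 ≤ k) :
    PRS F (k : ℤ) = Submodule.span F (gv F '' {d | d.degree = k - 1}) := by
  have h0 : ¬ ((k : ℤ) ≤ 0) := by exact_mod_cast by omega
  have h1 : ((k : ℤ) - 1).toNat = k - 1 := by omega
  rw [PRS, if_neg h0, h1, MvPolynomial.homogeneousSubmodule_eq_finsupp_supported,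
    AddMonoidAlgebra.supported_eq_span_single, Submodule.map_span, Set.image_image]
  congr 1
  ext v
  constructor
  · rintro ⟨d, hd, rfl⟩
    refine ⟨d, hd, ?_⟩
    funext p
    simp [gv, MvPolynomial.single_eq_monomial, MvPolynomial.aeval_monomial,
      Finsupp.prod_fintype _ _ (fun i => pow_zero _), Fin.prod_univ_two]
  · rintro ⟨d, hd, rfl⟩
    refine ⟨d, hd, ?_⟩
    funext p
    simp [gv, MvPolynomial.single_eq_monomial, MvPolynomial.aeval_monomial,
      Finsupp.prod_fintype _ _ (fun i => pow_zero _), Fin.prod_univ_two]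

/-- zero-extension as a linear map -/
noncomputable def extL : (F → F) →ₗ[F] (Option F → F) where
  toFun g := fun p => Option.elim p 0 g
  map_add' g h := by funext p; cases p <;> simp
  map_smul' c g := by funext p; cases p <;> simp

lemma zeroExt_eq_map (C : Submodule F (F → F)) : zeroExt F C = C.map (extL F) := by
  ext v
  constructor
  · rintro ⟨h1, h2⟩
    refine ⟨fun α => v (some α), h1, ?_⟩
    funext p
    cases p with
    | none => simpa [extL] using h2.symm
    | some α => rfl
  · rintro ⟨g, hg, rfl⟩
    exact ⟨hg, rfl⟩

lemma zeroExt_RS_eq_span (k : ℕ) :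
    zeroExt F (RS F (k : ℤ)) = Submodule.span F (wv F '' Set.Iio k) := by
  rw [zeroExt_eq_map, RS, Int.toNat_natCast, Polynomial.degreeLT_eq_span_X_pow,
    Submodule.map_span, Submodule.map_span, Set.image_image, Finset.coe_image,
    Finset.coe_range, Set.image_image]
  congr 1
  ext v
  constructor
  · rintro ⟨j, hj, rfl⟩
    refine ⟨j, hj, ?_⟩
    funext p
    cases p <;> simp [extL, wv]
  · rintro ⟨j, hj, rfl⟩
    refine ⟨j, hj, ?_⟩
    funext p
    cases p <;> simp [extL, wv]

end Aux

/-- for `1 ≤ k₁ < k₂ ≤ q`,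
`PRS_q(k₁) + PRS_q(k₂) = span{(1,0,…,0)} + (0, RS_q(k₂))`. -/
theorem PRS_sum (F : Type*) [Field F] [Fintype F] [DecidableEq F] (q k₁ k₂ : ℕ)
    (hq : Fintype.card F = q) (h1 : 1 ≤ k₁) (h12 : k₁ < k₂) (h2 : k₂ ≤ q) :
    PRS F (k₁ : ℤ) ⊔ PRS F (k₂ : ℤ) =
      Submodule.span F {Pi.single (none : Option F) (1 : F)} ⊔ zeroExt F (RS F (k₂ : ℤ)) := by
  have hk2 : 1 ≤ k₂ := by omega
  rw [PRS_eq_span_s7 F k₁ h1, PRS_eq_span_s7 F k₂ hk2, zeroExt_RS_eq_span F k₂,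
    ← Submodule.span_union, ← Submodule.span_union]
  apply Submodule.span_eq_span
  · rintro v (⟨d, hd, rfl⟩ | ⟨d, hd, rfl⟩) <;>
    · rw [gv_eq]
      refine Submodule.add_mem _ ?_ (Submodule.subset_span (Set.mem_union_right _ ⟨d 1, ?_, rfl⟩))
      · split
        · exact Submodule.subset_span (Set.mem_union_left _ rfl)
        · exact Submodule.zero_mem _
      · have := Finsupp.le_degree 1 d
        simp only [Set.mem_setOf_eq] at hd
        simp only [Set.mem_Iio]
        omega
  · -- first: e ∈ span S
    set S := (gv F '' {d | d.degree = k₁ - 1}) ∪ (gv F '' {d | d.degree = k₂ - 1}) with hS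
    have hd1 : ((Finsupp.single (1 : Fin 2) (k₁-1)) : Fin 2 →₀ ℕ).degree = k₁ - 1 := by
      rw [deg2_s7]; simp [Finsupp.single_apply]
    have hd2 : ((Finsupp.single (0 : Fin 2) (k₂-k₁) + Finsupp.single 1 (k₁-1)) : Fin 2 →₀ ℕ).degree = k₂ - 1 := by
      rw [deg2_s7]; simp [Finsupp.single_apply]; omega
    have m1 : gv F (Finsupp.single 1 (k₁-1)) ∈ Submodule.span F S :=
      Submodule.subset_span (Set.mem_union_left _ ⟨_, hd1, rfl⟩)
    have m2 : gv F (Finsupp.single 0 (k₂-k₁) + Finsupp.single 1 (k₁-1)) ∈ Submodule.span F S :=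
      Submodule.subset_span (Set.mem_union_right _ ⟨_, hd2, rfl⟩)
    have he : Pi.single (none : Option F) (1:F) ∈ Submodule.span F S := by
      have := Submodule.sub_mem _ m1 m2
      rw [gv_eq, gv_eq] at this
      simp only [Finsupp.single_apply, Finsupp.add_apply] at this
      simpa [if_neg (by omega : ¬ ((0:Fin 2) = 1)), if_pos rfl,
        show ¬ (k₂ - k₁ + 0 = 0) by omega, show ¬ (k₂ - k₁ = 0) by omega] using this
    rintro v (rfl | ⟨j, hj, rfl⟩)
    · exact he
    · simp only [Set.mem_Iio] at hj
      by_cases hjlt : j + 1 < k₂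
      · have hd : ((Finsupp.single (0 : Fin 2) (k₂-1-j) + Finsupp.single 1 j) : Fin 2 →₀ ℕ).degree = k₂ - 1 := by
          rw [deg2_s7]; simp [Finsupp.single_apply]; omega
        have m3 : gv F (Finsupp.single 0 (k₂-1-j) + Finsupp.single 1 j) ∈ Submodule.span F S :=
          Submodule.subset_span (Set.mem_union_right _ ⟨_, hd, rfl⟩)
        rw [gv_eq] at m3
        simp only [Finsupp.single_apply, Finsupp.add_apply] at m3
        simpa [if_neg (by omega : ¬ ((0:Fin 2) = 1)), if_pos rfl,
          show ¬ (k₂ - 1 - j + 0 = 0) by omega, show ¬ (k₂ - 1 - j = 0) by omega] using m3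
      · have hj2 : j = k₂ - 1 := by omega
        subst hj2
        have hd : ((Finsupp.single (1 : Fin 2) (k₂-1)) : Fin 2 →₀ ℕ).degree = k₂ - 1 := by
          rw [deg2_s7]; simp [Finsupp.single_apply]
        have m3 : gv F (Finsupp.single 1 (k₂-1)) ∈ Submodule.span F S :=
          Submodule.subset_span (Set.mem_union_right _ ⟨_, hd, rfl⟩)
        have hsub := Submodule.sub_mem _ m3 he
        rw [gv_eq] at hsub
        simp only [Finsupp.single_apply] at hsub
        simpa [if_neg (by omega : ¬ ((0:Fin 2) = 1)), if_pos rfl] using hsub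
end
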